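/- Let A_d be the d×d matrix over F whose (i,j)-entry is (v_i·v_j − 1)^{-1}. Then det(A_d) = ∏_{1≤k<j≤d}(v_k − v_j)² · ∏_{1≤k,j≤d}(v_k·v_j − 1)^{-1}; equivalently, det(A_d)·∏_{1≤k,j≤d}(v_k·v_j − 1) = ∏_{1≤k<j≤d}(v_k − v_j)². -/

import Mathlib

open Finset Matrix

lemma cauchy_aux {F : Type*} [Field F] {a b : F} (ha : a ≠ 0) (hb : b ≠ 0) (u w : F)
    (h : u * w = b - a) : a⁻¹ = b⁻¹ * (u * (w * a⁻¹)) + b⁻¹ * 1 := by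
  have h1 : u * (w * a⁻¹) = (b - a) * a⁻¹ := by rw [← mul_assoc, h]
  rw [h1, mul_one, sub_mul, mul_inv_cancel₀ ha, mul_sub, mul_one, ← mul_assoc,
    inv_mul_cancel₀ hb, one_mul]
  ring

lemma cauchy_aux2 {F : Type*} [Field F] {a b p q : F} (ha : a ≠ 0) (hb : b ≠ 0)
    (h : p * b - q * a = q - p) : p * a⁻¹ - q * b⁻¹ = (q - p) * (b⁻¹ * a⁻¹) := by
  rw [← h]
  field_simp

lemma cauchy_key {F : Type*} [Field F] : ∀ (d : ℕ) (v : Fin d → F),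
    (∀ i j : Fin d, v i * v j ≠ 1) →
    (Matrix.of fun i j : Fin d => (v i * v j - 1)⁻¹).det *
        (∏ k : Fin d, ∏ j : Fin d, (v k * v j - 1)) =
      ∏ k : Fin d, ∏ j ∈ Finset.Ioi k, (v k - v j) ^ 2 := by
  intro d
  induction d with
  | zero => intro v hv; simp [Matrix.det_fin_zero]
  | succ d ih =>
    intro v hv
    have h0 : ∀ i j : Fin (d+1), v i * v j - 1 ≠ 0 := fun i j => sub_ne_zero.mpr (hv i j)
    set A : Matrix (Fin (d+1)) (Fin (d+1)) F := Matrix.of fun i j => (v i * v j - 1)⁻¹ with hA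
    set r : Fin (d+1) → F := Fin.cons 1 fun i' => v 0 - v i'.succ with hr
    set C : Matrix (Fin (d+1)) (Fin (d+1)) F :=
      Matrix.of (Fin.cons (fun _ => (1:F)) (fun i' j => v j * (v i'.succ * v j - 1)⁻¹)) with hC
    set B : Matrix (Fin (d+1)) (Fin (d+1)) F :=
      Matrix.of (fun i j => (v 0 * v j - 1)⁻¹ * (r i * C i j)) with hB
    have hAB : A.det = B.det := by
      apply det_eq_of_forall_row_eq_smul_add_const
        (Fin.cons (0:F) (fun _ => (1:F))) 0 (Fin.cons_zero _ _)
      intro i j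
      refine Fin.cases ?_ (fun i' => ?_) i
      · simp [hA, hB, hC, hr]
      · simp only [hA, hB, hC, hr, Matrix.of_apply, Fin.cons_succ, Fin.cons_zero, Pi.one_apply,
          one_mul]
        exact cauchy_aux (h0 i'.succ j) (h0 0 j) _ _ (by ring)
    have hBdet : B.det = (∏ j : Fin (d+1), (v 0 * v j - 1)⁻¹) *
        ((∏ i : Fin (d+1), r i) * C.det) := by
      rw [hB]
      refine (Matrix.det_mul_row (fun j => (v 0 * v j - 1)⁻¹)
        (Matrix.of fun i j => r i * C i j)).trans ?_
      congr 1
      exact Matrix.det_mul_column r C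
    -- column reduction on C (via transpose)
    set N : Matrix (Fin d) (Fin d) F := Matrix.of fun i j : Fin d =>
      (v i.succ * v j.succ - 1)⁻¹ with hN
    set E : Matrix (Fin (d+1)) (Fin (d+1)) F :=
      Matrix.of (Fin.cons (fun i => C i 0) (fun j' i => C i j'.succ - C i 0)) with hE
    have hCE : C.det = E.det := by
      rw [← Matrix.det_transpose C]
      apply det_eq_of_forall_row_eq_smul_add_const
        (Fin.cons (0:F) (fun _ => (1:F))) 0 (Fin.cons_zero _ _)
      intro j i
      refine Fin.cases ?_ (fun j' => ?_) j
      · simp [hE]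
      · simp only [hE, Matrix.transpose_apply, Matrix.of_apply, Fin.cons_succ, Fin.cons_zero,
          one_mul]
        ring
    have hEdet : E.det = (E.submatrix Fin.succ Fin.succ).det := by
      rw [Matrix.det_succ_column_zero, Fin.sum_univ_succ]
      simp [hE, hC, Fin.succAbove_zero]
    have hminor : E.submatrix Fin.succ Fin.succ =
        Matrix.of (fun j i : Fin d => (v 0 - v j.succ) *
          ((v i.succ * v 0 - 1)⁻¹ * N j i)) := by
      ext j i
      have e : N j i = (v i.succ * v j.succ - 1)⁻¹ := by
        simp only [hN, Matrix.of_apply, mul_comm]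
      simp only [hE, hC, Matrix.submatrix_apply, Matrix.of_apply, Fin.cons_succ,
        Fin.cons_zero, e]
      exact cauchy_aux2 (h0 i.succ j.succ) (h0 i.succ 0) (by ring)
    have hminordet : (E.submatrix Fin.succ Fin.succ).det =
        (∏ j : Fin d, (v 0 - v j.succ)) *
          ((∏ i : Fin d, (v i.succ * v 0 - 1)⁻¹) * N.det) := by
      rw [hminor]
      refine (Matrix.det_mul_column (fun j : Fin d => v 0 - v j.succ)
        (Matrix.of fun j i => (v i.succ * v 0 - 1)⁻¹ * N j i)).trans ?_
      congr 1
      exact Matrix.det_mul_row (fun i => (v i.succ * v 0 - 1)⁻¹) N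
    have hIH : N.det * (∏ k : Fin d, ∏ j : Fin d, (v k.succ * v j.succ - 1)) =
        ∏ k : Fin d, ∏ j ∈ Finset.Ioi k, (v k.succ - v j.succ) ^ 2 := by
      simpa using ih (v ∘ Fin.succ) (fun i j => hv i.succ j.succ)
    have hr_prod : (∏ i : Fin (d+1), r i) = ∏ i : Fin d, (v 0 - v i.succ) := by
      rw [hr, Fin.prod_univ_succ]
      simp
    have hPne : (∏ j : Fin (d+1), (v 0 * v j - 1)) ≠ 0 :=
      Finset.prod_ne_zero_iff.mpr fun j _ => h0 0 j
    have hQne : (∏ i : Fin d, (v i.succ * v 0 - 1)) ≠ 0 :=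
      Finset.prod_ne_zero_iff.mpr fun i _ => h0 i.succ 0
    have hsplit : (∏ k : Fin (d+1), ∏ j : Fin (d+1), (v k * v j - 1)) =
        (∏ j : Fin (d+1), (v 0 * v j - 1)) * ((∏ i : Fin d, (v i.succ * v 0 - 1)) *
          (∏ i : Fin d, ∏ j : Fin d, (v i.succ * v j.succ - 1))) := by
      rw [Fin.prod_univ_succ, ← Finset.prod_mul_distrib]
      congr 1
      refine Finset.prod_congr rfl fun i _ => ?_
      rw [Fin.prod_univ_succ]
    have hRHS : (∏ k : Fin (d+1), ∏ j ∈ Finset.Ioi k, (v k - v j) ^ 2) =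
        (∏ j : Fin d, (v 0 - v j.succ) ^ 2) *
          (∏ k : Fin d, ∏ j ∈ Finset.Ioi k, (v k.succ - v j.succ) ^ 2) := by
      rw [Fin.prod_univ_succ, Fin.prod_Ioi_zero]
      congr 1
      refine Finset.prod_congr rfl fun k _ => ?_
      rw [Fin.prod_Ioi_succ]
    rw [hAB, hBdet, hCE, hEdet, hminordet, hr_prod, hsplit, hRHS, Finset.prod_inv_distrib,
      Finset.prod_inv_distrib, ← hIH, Finset.prod_pow]
    have hR : (∏ x : Fin d, (-1 + v 0 * v x.succ)) ≠ 0 :=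
      Finset.prod_ne_zero_iff.mpr fun x _ => by rw [neg_add_eq_sub]; exact h0 0 x.succ
    field_simp
    rw [div_eq_iff (Finset.prod_ne_zero_iff.mpr fun x _ => h0 0 x.succ)]
    ring

/-- Let `F` be a field and `v₁,…,v_d ∈ F` with `vᵢ·vⱼ ≠ 1` for all `i,j`.
Let `A_d` be the `d×d` matrix whose `(i,j)` entry is `(vᵢ·vⱼ − 1)⁻¹`.  Then
`det A_d = ∏_{k<j}(v_k − v_j)² · (∏_{k,j}(v_k·v_j − 1))⁻¹`; equivalently,
`det A_d · ∏_{k,j}(v_k·v_j − 1) = ∏_{k<j}(v_k − v_j)²`. -/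
theorem stmt_0 {F : Type*} [Field F] {d : ℕ} (v : Fin d → F)
    (hv : ∀ i j : Fin d, v i * v j ≠ 1) :
    (Matrix.of fun i j : Fin d => (v i * v j - 1)⁻¹).det =
      (∏ k : Fin d, ∏ j ∈ Finset.Ioi k, (v k - v j) ^ 2) *
        (∏ k : Fin d, ∏ j : Fin d, (v k * v j - 1))⁻¹ ∧
    (Matrix.of fun i j : Fin d => (v i * v j - 1)⁻¹).det *
        (∏ k : Fin d, ∏ j : Fin d, (v k * v j - 1)) =
      ∏ k : Fin d, ∏ j ∈ Finset.Ioi k, (v k - v j) ^ 2 := by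
  have key := cauchy_key d v hv
  have hP : (∏ k : Fin d, ∏ j : Fin d, (v k * v j - 1)) ≠ 0 :=
    Finset.prod_ne_zero_iff.mpr fun k _ =>
      Finset.prod_ne_zero_iff.mpr fun j _ => sub_ne_zero.mpr (hv k j)
  exact ⟨by rw [eq_mul_inv_iff_mul_eq₀ hP]; exact key, key⟩
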